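/- arXiv:1405.7923 — 2 statements merged into one kernel-verified Lean document; each statement's English description precedes it below -/
import Mathlib

section
/- Let L be an image-finite labelled transition system, let s, t be states with eqlevel(s,t) = e < ω, and suppose there is a sequence {(s,t)} = B_0 ⊐ B_1 ⊐ ⋯ ⊐ B_k of sets of pairs of states (each B_{j+1} a minimal expansion for B_j). Then k ≤ e and LeastEqLev(B_k) ≤ e − k; in particular, B_k contains a pair (s',t') with eqlevel(s',t') ≤ e − k. -/
/-- A labelled transition system with states `S` and actions `A`. -/
structure LTS (S : Type*) (A : Type*) where
  Tr : A → S → S → Prop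

namespace LTS

variable {S A : Type*}

/-- An LTS is image-finite if each state has finitely many `a`-successors. -/
def ImageFinite (L : LTS S A) : Prop := ∀ a s, {t | L.Tr a s t}.Finite

/-- A set `B` of pairs of states covers the pair `p`. -/
def Covers (L : LTS S A) (B : Set (S × S)) (p : S × S) : Prop :=
  (∀ a s', L.Tr a p.1 s' → ∃ t', L.Tr a p.2 t' ∧ (s', t') ∈ B) ∧
  (∀ a t', L.Tr a p.2 t' → ∃ s', L.Tr a p.1 s' ∧ (s', t') ∈ B)

/-- `B'` covers the set `B` (i.e., covers each of its pairs). -/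
def CoversSet (L : LTS S A) (B' B : Set (S × S)) : Prop := ∀ p ∈ B, L.Covers B' p

/-- `B ⊐ B'`: `B'` is a minimal expansion for `B`. -/
def MinExp (L : LTS S A) (B B' : Set (S × S)) : Prop :=
  L.CoversSet B' B ∧ ∀ B'', B'' ⊂ B' → ¬ L.CoversSet B'' B

/-- The stratified equivalences: `∼_0` is everything, `∼_{k+1}` are the pairs covered by `∼_k`. -/
def simN (L : LTS S A) : ℕ → Set (S × S)
  | 0 => Set.univ
  | k + 1 => {p | L.Covers (L.simN k) p}

/-- `eqlevel(s,t) ∈ ℕ ∪ {ω}`: the largest `e` with `s ∼_e t` (`⊤` plays the role of `ω`,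
meaning `s ∼_k t` for all `k ∈ ℕ`). -/
noncomputable def eqlevel (L : LTS S A) (s t : S) : ℕ∞ :=
  sSup {e : ℕ∞ | ∃ k : ℕ, e = (k : ℕ∞) ∧ (s, t) ∈ L.simN k}

/-- `LeastEqLev(B) = min {eqlevel(s,t) | (s,t) ∈ B}`, with `min ∅ = ω = ⊤`. -/
noncomputable def leastEqLev (L : LTS S A) (B : Set (S × S)) : ℕ∞ :=
  sInf {e : ℕ∞ | ∃ p ∈ B, e = L.eqlevel p.1 p.2}

/-- `B` is a bisimulation if it covers itself. -/
def Bisimulation (L : LTS S A) (B : Set (S × S)) : Prop := L.CoversSet B B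

/-- `s ∼ t`: some bisimulation contains `(s,t)`. -/
def Bisim (L : LTS S A) (s t : S) : Prop := ∃ B, L.Bisimulation B ∧ (s, t) ∈ B

end LTS

namespace LTS

variable {S A : Type*}

lemma covers_mono' (L : LTS S A) {B B' : Set (S × S)} (h : B ⊆ B') {p : S × S}
    (hc : L.Covers B p) : L.Covers B' p := by
  constructor
  · intro a s' hs'
    obtain ⟨t', ht', hm⟩ := hc.1 a s' hs'
    exact ⟨t', ht', h hm⟩
  · intro a t' ht'
    obtain ⟨s', hs', hm⟩ := hc.2 a t' ht'
    exact ⟨s', hs', h hm⟩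

lemma simN_succ_subset' (L : LTS S A) : ∀ k, L.simN (k+1) ⊆ L.simN k
  | 0 => fun p _ => Set.mem_univ p
  | k+1 => fun p hp => L.covers_mono' (simN_succ_subset' L k) hp

lemma simN_antitone' (L : LTS S A) {j k : ℕ} (h : j ≤ k) : L.simN k ⊆ L.simN j := by
  induction h with
  | refl => exact subset_rfl
  | step h ih => exact fun p hp => ih (L.simN_succ_subset' _ hp)

lemma le_eqlevel_iff' (L : LTS S A) (s t : S) (m : ℕ) :
    (m : ℕ∞) ≤ L.eqlevel s t ↔ (s, t) ∈ L.simN m := by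
  constructor
  · intro hle
    by_contra hmem
    match m, hmem with
    | 0, hmem => exact hmem (Set.mem_univ _)
    | n+1, hmem =>
      have hub : L.eqlevel s t ≤ (n : ℕ∞) := by
        apply sSup_le
        rintro x ⟨j, rfl, hj⟩
        have hjn : j ≤ n := by
          by_contra hjn
          exact hmem (L.simN_antitone' (by omega) hj)
        exact_mod_cast hjn
      have : ((n+1 : ℕ) : ℕ∞) ≤ (n : ℕ∞) := le_trans hle hub
      have : n + 1 ≤ n := by exact_mod_cast this
      omega
  · intro hmem
    exact le_sSup ⟨m, rfl, hmem⟩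

lemma covers_eqlevel_lemma (L : LTS S A) {B : Set (S × S)} {p : S × S}
    (hc : L.Covers B p) {m : ℕ} (hm : L.eqlevel p.1 p.2 = (m : ℕ∞)) :
    1 ≤ m ∧ ∃ q ∈ B, L.eqlevel q.1 q.2 ≤ ((m - 1 : ℕ) : ℕ∞) := by
  have h1 : 1 ≤ m := by
    have h : ((1:ℕ) : ℕ∞) ≤ L.eqlevel p.1 p.2 := by
      rw [le_eqlevel_iff']
      show L.Covers (L.simN 0) (p.1, p.2)
      have : L.Covers Set.univ p := L.covers_mono' (Set.subset_univ B) hc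
      simpa [LTS.simN] using this
    rw [hm] at h
    exact_mod_cast h
  refine ⟨h1, ?_⟩
  by_contra hno
  push_neg at hno
  have hsub : B ⊆ L.simN m := by
    intro q hq
    have hlt : ((m - 1 : ℕ) : ℕ∞) < L.eqlevel q.1 q.2 := hno q hq
    have h2 : ((m - 1 : ℕ) : ℕ∞) + 1 ≤ L.eqlevel q.1 q.2 := Order.add_one_le_of_lt hlt
    have h3 : (m : ℕ∞) ≤ L.eqlevel q.1 q.2 := by
      have heq : ((m - 1 : ℕ) : ℕ∞) + 1 = (m : ℕ∞) := by
        obtain ⟨n, rfl⟩ := Nat.exists_eq_add_of_le h1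
        have : 1 + n - 1 = n := by omega
        rw [this]
        push_cast
        ring
      rwa [heq] at h2
    have := (L.le_eqlevel_iff' q.1 q.2 m).mp h3
    simpa using this
  have hmem : (p.1, p.2) ∈ L.simN (m+1) := by
    show L.Covers (L.simN m) (p.1, p.2)
    have : L.Covers (L.simN m) p := L.covers_mono' hsub hc
    simpa using this
  have hle : ((m+1 : ℕ) : ℕ∞) ≤ L.eqlevel p.1 p.2 := by
    rw [le_eqlevel_iff']
    exact_mod_cast hmem
  rw [hm] at hle
  have : m + 1 ≤ m := by exact_mod_cast hle
  omega

end LTS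

/-- If `eqlevel(s,t) = e < ω` and `{(s,t)} = B_0 ⊐ B_1 ⊐ ⋯ ⊐ B_k`, then
`k ≤ e` and `LeastEqLev(B_k) ≤ e − k`; in particular `B_k` contains a pair of
eq-level at most `e − k`. -/
theorem min_expansion_seq_decreases_eqlevel {S A : Type*} (L : LTS S A)
    (hfin : L.ImageFinite) (s t : S) (e : ℕ)
    (he : L.eqlevel s t = (e : ℕ∞)) (k : ℕ) (Bs : ℕ → Set (S × S))
    (h0 : Bs 0 = {(s, t)}) (hstep : ∀ j < k, L.MinExp (Bs j) (Bs (j + 1))) :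
    k ≤ e ∧ L.leastEqLev (Bs k) ≤ ((e - k : ℕ) : ℕ∞) ∧
      ∃ p ∈ Bs k, L.eqlevel p.1 p.2 ≤ ((e - k : ℕ) : ℕ∞) := by
  have key : ∀ j, j ≤ k → j ≤ e ∧ ∃ p ∈ Bs j, L.eqlevel p.1 p.2 ≤ ((e - j : ℕ) : ℕ∞) := by
    intro j
    induction j with
    | zero =>
      intro _
      refine ⟨Nat.zero_le e, (s, t), ?_, ?_⟩
      · rw [h0]; rfl
      · simp [he]
    | succ j ih =>
      intro hjk
      obtain ⟨hje, p, hpB, hple⟩ := ih (Nat.le_of_succ_le hjk)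
      have hcov : L.Covers (Bs (j+1)) p := (hstep j (by omega)).1 p hpB
      have hfin' : L.eqlevel p.1 p.2 ≠ ⊤ := by
        intro h
        rw [h] at hple
        exact absurd hple (not_le.mpr (lt_top_iff_ne_top.mpr (ENat.coe_ne_top _)))
      lift L.eqlevel p.1 p.2 to ℕ using hfin' with m hm
      obtain ⟨h1m, q, hqB, hqle⟩ := L.covers_eqlevel_lemma hcov hm.symm
      have hmej : m ≤ e - j := by exact_mod_cast hple
      have hj1e : j + 1 ≤ e := by omega
      refine ⟨hj1e, q, hqB, le_trans hqle ?_⟩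
      have : m - 1 ≤ e - (j + 1) := by omega
      exact_mod_cast this
  obtain ⟨hke, p, hpB, hple⟩ := key k le_rfl
  refine ⟨hke, ?_, p, hpB, hple⟩
  exact le_trans (sInf_le ⟨p, hpB, rfl⟩) hple
end

section
/- Let G = (N, Act, R) be a first-order grammar such that for each nonterminal A and each i ∈ [1, arity(A)] there exists an (A,i)-sink word, and let M_0 = 1 + max over all A, i of the length of a shortest (A,i)-sink word. If T →u T' is a sinking path in the rule-based LTS L^rul_G, then it can be written T →u1 V →u2 T' with u = u1·u2, |u2| < M_0, and V a subterm occurring in T at depth at least |u| ÷ M_0 (integer division). -/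
/-- The "signature" of a first-order grammar: a finite set of ranked nonterminals
(represented as `Fin ntCount`, with arities) and a finite set of actions
(represented as `Fin actCount`). -/
structure GrammarSig where
  ntCount : ℕ
  arity : Fin ntCount → ℕ
  actCount : ℕ

/-- The polynomial functor whose coinductive fixed point is the set of (finite or
infinite) terms over the nonterminals: a node is labelled either by a nonterminal
`A` (with `arity A` ordered children) or by a variable `x_n`, `n : ℕ` (a leaf). -/
def GrammarSig.P (S : GrammarSig) : PFunctor :=
  ⟨Fin S.ntCount ⊕ ℕ, fun l =>
    match l with
    | Sum.inl A => Fin (S.arity A)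
    | Sum.inr _ => Empty⟩

/-- Terms over the signature `S`: finite or infinite ordered trees with nodes labelled
by nonterminals (inner nodes) or variables (leaves). -/
def GTerm (S : GrammarSig) := PFunctor.M S.P

/-- The term consisting of the single variable `x_n`. -/
def GTerm.var (S : GrammarSig) (n : ℕ) : GTerm S :=
  PFunctor.M.mk ⟨Sum.inr n, fun e => e.elim⟩

/-- The term `A(c 0, …, c (m-1))`. -/
def GTerm.app {S : GrammarSig} (A : Fin S.ntCount) (c : Fin (S.arity A) → GTerm S) :
    GTerm S :=
  PFunctor.M.mk ⟨Sum.inl A, c⟩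

/-- Applying a substitution `σ` to a term `T`: every occurrence of a variable `x_n`
in `T` is replaced by `σ n` (defined corecursively). -/
def GTerm.subst {S : GrammarSig} (σ : ℕ → GTerm S) (T : GTerm S) : GTerm S :=
  PFunctor.M.corec
    (fun st : Bool × GTerm S =>
      match PFunctor.M.dest st.2 with
      | ⟨Sum.inl A, c⟩ => ⟨Sum.inl A, fun i => (st.1, c i)⟩
      | ⟨Sum.inr n, _⟩ =>
        if st.1 then
          ⟨(PFunctor.M.dest (σ n)).1, fun i => (false, (PFunctor.M.dest (σ n)).2 i)⟩
        else ⟨Sum.inr n, fun e => e.elim⟩)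
    (true, T)

/-- A substitution (as a total map `ℕ → GTerm S`) has finite support. -/
def FinSupp {S : GrammarSig} (σ : ℕ → GTerm S) : Prop :=
  {n | σ n ≠ GTerm.var S n}.Finite

/-- `childRel S T T'`: `T'` is a root-successor (depth-1 subterm occurrence) of `T`. -/
def childRel (S : GrammarSig) : GTerm S → GTerm S → Prop := fun T T' =>
  ∃ (A : Fin S.ntCount) (c : Fin (S.arity A) → GTerm S), T = GTerm.app A c ∧ ∃ i, T' = c i

/-- `T'` is a subterm of `T`. -/
def SubtermOf (S : GrammarSig) (T' T : GTerm S) : Prop :=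
  Relation.ReflTransGen (childRel S) T T'

/-- The variable `x_n` occurs in `T`. -/
def VarOccurs (S : GrammarSig) (n : ℕ) (T : GTerm S) : Prop :=
  SubtermOf S (GTerm.var S n) T

/-- `OccAtDepth S d T V`: `V` has a subterm-occurrence in `T` at depth `d`. -/
inductive OccAtDepth (S : GrammarSig) : ℕ → GTerm S → GTerm S → Prop
  | refl (T : GTerm S) : OccAtDepth S 0 T T
  | step {d : ℕ} {T T' V : GTerm S} :
      childRel S T T' → OccAtDepth S d T' V → OccAtDepth S (d + 1) T V

/-- A term is regular if it has only finitely many distinct subterms. -/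
def RegularT (S : GrammarSig) (T : GTerm S) : Prop := {T' | SubtermOf S T' T}.Finite

/-- The presentation size of a (regular) term: the number of its distinct subterms. -/
noncomputable def pressize (S : GrammarSig) (T : GTerm S) : ℕ :=
  {T' | SubtermOf S T' T}.ncard

/-- Finite terms over the signature `S`. -/
inductive FTerm (S : GrammarSig) where
  | var : ℕ → FTerm S
  | app : (A : Fin S.ntCount) → (Fin (S.arity A) → FTerm S) → FTerm S

/-- The (finite or infinite) term corresponding to a finite term. -/
def FTerm.toTerm {S : GrammarSig} : FTerm S → GTerm S
  | .var n => GTerm.var S n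
  | .app A c => GTerm.app A (fun i => (c i).toTerm)

/-- The variable `x_n` occurs in the finite term `E`. -/
def FTerm.VOccurs {S : GrammarSig} (n : ℕ) : FTerm S → Prop
  | .var m => m = n
  | .app _ c => ∃ i, (c i).VOccurs n

/-- The depth of a finite term (the largest depth of a subterm occurrence). -/
def FTerm.depth {S : GrammarSig} : FTerm S → ℕ
  | .var _ => 0
  | .app _ c => Finset.univ.sup fun i => (c i).depth + 1

/-- A rule `A(x_0, …, x_{m−1}) →ₐ E` of a first-order grammar: `E` is a finite term
all of whose variables are among `x_0, …, x_{m−1}` where `m = arity A`. -/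
structure GRule (S : GrammarSig) where
  nt : Fin S.ntCount
  act : Fin S.actCount
  rhs : FTerm S
  rhs_wf : ∀ n : ℕ, rhs.VOccurs n → n < S.arity nt

/-- A first-order grammar: a signature together with a finite set (list) of rules. -/
structure FOGrammar where
  sig : GrammarSig
  rules : List (GRule sig)

/-- The term `A(x_0, …, x_{m−1})` (the left-hand side of rules for `A`). -/
def lhsTerm {S : GrammarSig} (A : Fin S.ntCount) : GTerm S :=
  GTerm.app A fun i => GTerm.var S i.val

/-- The rule-based LTS `L^rul_G`: states are the terms, actions are the rules of `G`,
and a rule `r : A(x_0,…,x_{m−1}) →ₐ E` induces `(A(x_0,…,x_{m−1}))σ →r Eσ` for every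
substitution `σ`. -/
def LTSrul (G : FOGrammar) : LTS (GTerm G.sig) (GRule G.sig) where
  Tr r T T' := r ∈ G.rules ∧ ∃ σ : ℕ → GTerm G.sig, FinSupp σ ∧
    T = GTerm.subst σ (lhsTerm r.nt) ∧ T' = GTerm.subst σ r.rhs.toTerm

/-- The action-based LTS `L^act_G`: the transitions of `L^rul_G` relabelled by the
actions of the rules; in addition each variable `x_n` has its own fresh action
(represented by `Sum.inr n`) with the single transition `x_n →_{a_{x_n}} x_n`. -/
def LTSact (G : FOGrammar) : LTS (GTerm G.sig) (Fin G.sig.actCount ⊕ ℕ) where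
  Tr a T T' :=
    match a with
    | Sum.inl a => ∃ r : GRule G.sig, r.act = a ∧ (LTSrul G).Tr r T T'
    | Sum.inr n => T = GTerm.var G.sig n ∧ T' = GTerm.var G.sig n

/-- `RPath G T w T'`: the path `T →w T'` in the rule-based LTS `L^rul_G`, `w ∈ R*`. -/
inductive RPath (G : FOGrammar) : GTerm G.sig → List (GRule G.sig) → GTerm G.sig → Prop
  | nil (T : GTerm G.sig) : RPath G T [] T
  | cons {T T1 T' : GTerm G.sig} {r : GRule G.sig} {w : List (GRule G.sig)} :
      (LTSrul G).Tr r T T1 → RPath G T1 w T' → RPath G T (r :: w) T'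

/-- `APath G T w T'`: the path `T →w T'` in the action-based LTS `L^act_G` for a word
`w ∈ Act*` of proper actions (using no special variable transitions). -/
inductive APath (G : FOGrammar) :
    GTerm G.sig → List (Fin G.sig.actCount) → GTerm G.sig → Prop
  | nil (T : GTerm G.sig) : APath G T [] T
  | cons {T T1 T' : GTerm G.sig} {a : Fin G.sig.actCount} {w : List (Fin G.sig.actCount)} :
      (LTSact G).Tr (Sum.inl a) T T1 → APath G T1 w T' → APath G T (a :: w) T'

/-- `w ∈ R*` is an `(A,i)`-sink word: `A(x_0,…,x_{m−1}) →w x_i` in `L^rul_G`. -/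
def SinkWord (G : FOGrammar) (A : Fin G.sig.ntCount) (i : Fin (G.sig.arity A))
    (w : List (GRule G.sig)) : Prop :=
  RPath G (lhsTerm A) w (GTerm.var G.sig i.val)

/-- `M_0 = 1 + max_{A,i} (length of a shortest (A,i)-sink word)`. -/
noncomputable def M0 (G : FOGrammar) : ℕ :=
  1 + Finset.univ.sup fun A : Fin G.sig.ntCount =>
        Finset.univ.sup fun i : Fin (G.sig.arity A) =>
          sInf {n : ℕ | ∃ w, SinkWord G A i w ∧ w.length = n}

/-- The path `V →w` is root-performable: `A(x_0,…,x_{m−1}) →w` for `A` the root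
nonterminal of `V` (so `w` is enabled by any term with root `A`). A root-performable
path of length `M_0` is called a non-sink. -/
def RootPerf (G : FOGrammar) (V : GTerm G.sig) (w : List (GRule G.sig)) : Prop :=
  ∃ (A : Fin G.sig.ntCount) (c : Fin (G.sig.arity A) → GTerm G.sig),
    V = GTerm.app A c ∧ ∃ H, RPath G (lhsTerm A) w H

/-- The path `T →u` is sinking: it contains no non-sink, i.e. every factorization
`u = u_1 u_2 u_3` with `|u_2| = M_0` sinks to a root-successor within the middle
segment: `u_2 = u'_2 u''_2` with `u'_2 ≠ ε`, `T →u_1 V' →u'_2 V''`, and `V''` a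
root-successor of `V'`. -/
def Sinking (G : FOGrammar) (T : GTerm G.sig) (u : List (GRule G.sig)) : Prop :=
  ∀ u1 u2 u3, u = u1 ++ u2 ++ u3 → u2.length = M0 G →
    ∃ (u2a u2b : List (GRule G.sig)) (V' V'' : GTerm G.sig),
      u2 = u2a ++ u2b ∧ u2a ≠ [] ∧
      RPath G T u1 V' ∧ RPath G V' u2a V'' ∧ childRel G.sig V' V''

section Aux

variable {S : GrammarSig}

/-- The step function used in `GTerm.subst`, named for reasoning. -/
def substStep (σ : ℕ → GTerm S) : Bool × GTerm S → S.P (Bool × GTerm S) :=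
  fun st =>
    match PFunctor.M.dest st.2 with
    | ⟨Sum.inl A, c⟩ => ⟨Sum.inl A, fun i => (st.1, c i)⟩
    | ⟨Sum.inr n, _⟩ =>
      if st.1 then
        ⟨(PFunctor.M.dest (σ n)).1, fun i => (false, (PFunctor.M.dest (σ n)).2 i)⟩
      else ⟨Sum.inr n, fun e => e.elim⟩

lemma subst_eq_corec (σ : ℕ → GTerm S) (T : GTerm S) :
    GTerm.subst σ T = PFunctor.M.corec (substStep σ) (true, T) := rfl

lemma corec_false (σ : ℕ → GTerm S) (T : GTerm S) :
    PFunctor.M.corec (substStep σ) (false, T) = T := by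
  apply PFunctor.M.bisim (fun x y => x = PFunctor.M.corec (substStep σ) (false, y))
  · intro x y hxy
    subst hxy
    rcases hd : PFunctor.M.dest y with ⟨l, g⟩
    cases l with
    | inl A =>
      refine ⟨Sum.inl A, fun i => PFunctor.M.corec (substStep σ) (false, g i), g, ?_, rfl, ?_⟩
      · rw [PFunctor.M.dest_corec]
        have h2 : substStep σ (false, y) =
            ⟨Sum.inl A, fun i => ((false : Bool), g i)⟩ := by
          simp [substStep, hd]
          rfl
        rw [h2]
        rfl
      · intro i
        rfl
    | inr n =>
      refine ⟨Sum.inr n, PFunctor.M.corec (substStep σ) ∘ (fun e : Empty => e.elim), g, ?_, rfl, fun i => i.elim⟩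
      rw [PFunctor.M.dest_corec]
      have h2 : substStep σ (false, y) =
          ⟨Sum.inr n, fun e : Empty => e.elim⟩ := by
        simp only [substStep, hd]
        exact congrArg (Sigma.mk (Sum.inr n)) (funext fun e : Empty => e.elim)
      rw [h2]
      rfl
  · rfl

lemma subst_var (σ : ℕ → GTerm S) (n : ℕ) :
    GTerm.subst σ (GTerm.var S n) = σ n := by
  have hkey : PFunctor.M.dest (GTerm.subst σ (GTerm.var S n)) = PFunctor.M.dest (σ n) := by
    rw [subst_eq_corec, PFunctor.M.dest_corec]
    rcases hσ : PFunctor.M.dest (σ n) with ⟨l, g⟩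
    have h2 : substStep σ (true, GTerm.var S n) =
        ⟨l, fun i => ((false : Bool), g i)⟩ := by
      have e0 : substStep σ (true, GTerm.var S n) =
          ⟨(PFunctor.M.dest (σ n)).1,
            fun i => ((false : Bool), (PFunctor.M.dest (σ n)).2 i)⟩ := rfl
      rw [e0, hσ]
    rw [h2, PFunctor.map_eq]
    congr 1
    funext i
    exact corec_false σ (g i)
  rw [← PFunctor.M.mk_dest (GTerm.subst σ (GTerm.var S n)), hkey]
  exact PFunctor.M.mk_dest (σ n)

lemma subst_app (σ : ℕ → GTerm S) (A : Fin S.ntCount) (c : Fin (S.arity A) → GTerm S) :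
    GTerm.subst σ (GTerm.app A c) = GTerm.app A (fun i => GTerm.subst σ (c i)) := by
  have hkey : PFunctor.M.dest (GTerm.subst σ (GTerm.app A c)) =
      (⟨Sum.inl A, fun i => GTerm.subst σ (c i)⟩ : S.P (GTerm S)) := by
    rw [subst_eq_corec, PFunctor.M.dest_corec]
    have e0 : substStep σ (true, GTerm.app A c) =
        ⟨Sum.inl A, fun i => ((true : Bool), c i)⟩ := rfl
    rw [e0]
    rfl
  rw [← PFunctor.M.mk_dest (GTerm.subst σ (GTerm.app A c)), hkey]
  rfl

lemma app_inj {A : Fin S.ntCount} {c c' : Fin (S.arity A) → GTerm S}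
    (h : GTerm.app A c = GTerm.app A c') : c = c' := by
  have := congrArg PFunctor.M.dest h
  rw [GTerm.app, GTerm.app] at this
  have e1 := PFunctor.M.dest_mk (F := S.P) (⟨Sum.inl A, c⟩ : S.P (GTerm S))
  have e2 := PFunctor.M.dest_mk (F := S.P) (⟨Sum.inl A, c'⟩ : S.P (GTerm S))
  have this' := e1.symm.trans (this.trans e2)
  exact eq_of_heq (Sigma.mk.inj_iff.mp this').2

lemma subst_congr (σ σ' : ℕ → GTerm S) (e : FTerm S)
    (h : ∀ n, e.VOccurs n → σ n = σ' n) :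
    GTerm.subst σ e.toTerm = GTerm.subst σ' e.toTerm := by
  induction e with
  | var m =>
    simp only [FTerm.toTerm, subst_var]
    exact h m rfl
  | app A c ih =>
    simp only [FTerm.toTerm, subst_app]
    congr 1
    funext i
    exact ih i (fun n hn => h n ⟨i, hn⟩)

end Aux

section Det

variable {G : FOGrammar}

lemma tr_det {r : GRule G.sig} {T T1 T2 : GTerm G.sig}
    (h1 : (LTSrul G).Tr r T T1) (h2 : (LTSrul G).Tr r T T2) : T1 = T2 := by
  obtain ⟨-, σ, -, hT, hT1⟩ := h1
  obtain ⟨-, σ', -, hT', hT2⟩ := h2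
  subst hT1 hT2
  have hlhs : GTerm.subst σ (lhsTerm r.nt) = GTerm.subst σ' (lhsTerm r.nt) := by
    rw [← hT, ← hT']
  rw [lhsTerm, subst_app, subst_app] at hlhs
  have hc := app_inj hlhs
  have hvar : ∀ i : Fin (G.sig.arity r.nt), σ i.val = σ' i.val := by
    intro i
    have := congrFun hc i
    simpa [subst_var] using this
  apply subst_congr
  intro n hn
  exact hvar ⟨n, r.rhs_wf n hn⟩

lemma rpath_nil_inv {T T' : GTerm G.sig} (h : RPath G T [] T') : T' = T := by
  cases h; rfl

lemma rpath_det {w : List (GRule G.sig)} {T T1 T2 : GTerm G.sig}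
    (h1 : RPath G T w T1) (h2 : RPath G T w T2) : T1 = T2 := by
  induction w generalizing T with
  | nil => rw [rpath_nil_inv h1, rpath_nil_inv h2]
  | cons r w ih =>
    cases h1 with
    | cons htr1 hp1 =>
      cases h2 with
      | cons htr2 hp2 =>
        have := tr_det htr1 htr2
        subst this
        exact ih hp1 hp2

lemma rpath_append {w1 w2 : List (GRule G.sig)} {T W T' : GTerm G.sig}
    (h1 : RPath G T w1 W) (h2 : RPath G W w2 T') : RPath G T (w1 ++ w2) T' := by
  induction h1 with
  | nil => exact h2
  | cons htr _ ih => exact RPath.cons htr (ih h2)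

lemma rpath_split {w1 w2 : List (GRule G.sig)} {T T' : GTerm G.sig}
    (h : RPath G T (w1 ++ w2) T') : ∃ W, RPath G T w1 W ∧ RPath G W w2 T' := by
  induction w1 generalizing T with
  | nil => exact ⟨T, RPath.nil T, h⟩
  | cons r w1 ih =>
    cases h with
    | cons htr hp =>
      obtain ⟨W, hW1, hW2⟩ := ih hp
      exact ⟨W, RPath.cons htr hW1, hW2⟩

end Det

lemma M0_pos (G : FOGrammar) : 0 < M0 G := by
  rw [M0]; omega

lemma key_lemma (G : FOGrammar) (n : ℕ) :
    ∀ (T T' : GTerm G.sig) (u : List (GRule G.sig)), u.length ≤ n →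
      RPath G T u T' → Sinking G T u →
      ∃ (u1 u2 : List (GRule G.sig)) (V : GTerm G.sig),
        u = u1 ++ u2 ∧ u2.length < M0 G ∧
        RPath G T u1 V ∧ RPath G V u2 T' ∧
        ∃ d : ℕ, u.length / M0 G ≤ d ∧ OccAtDepth G.sig d T V := by
  induction n with
  | zero =>
    intro T T' u hlen hpath _
    have hu : u = [] := List.length_eq_zero_iff.mp (Nat.le_zero.mp hlen)
    subst hu
    exact ⟨[], [], T, rfl, M0_pos G, RPath.nil T, hpath,
      0, by simp, OccAtDepth.refl T⟩
  | succ n ih =>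
    intro T T' u hlen hpath hsinking
    by_cases hshort : u.length < M0 G
    · exact ⟨[], u, T, rfl, hshort, RPath.nil T, hpath,
        0, by simp [Nat.div_eq_of_lt hshort], OccAtDepth.refl T⟩
    · push_neg at hshort
      set u2 := u.take (M0 G) with hu2
      set u3 := u.drop (M0 G) with hu3
      have hu23 : u = u2 ++ u3 := (List.take_append_drop _ u).symm
      have hlen2 : u2.length = M0 G := by
        rw [hu2, List.length_take]; omega
      obtain ⟨u2a, u2b, V', V'', hsplit, hne, hp0, hpa, hchild⟩ :=
        hsinking [] u2 u3 (by simpa using hu23) hlen2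
      have hV' : V' = T := rpath_nil_inv hp0
      rw [hV'] at hpa hchild
      have hlena : 1 ≤ u2a.length := by
        cases u2a with
        | nil => exact absurd rfl hne
        | cons _ _ => simp
      have hlenab : u2a.length + u2b.length = M0 G := by
        rw [← hlen2, hsplit, List.length_append]
      -- decompose actual path at u2a
      have hueq : u = u2a ++ (u2b ++ u3) := by
        rw [hu23, hsplit, List.append_assoc]
      have hpath' : RPath G T (u2a ++ (u2b ++ u3)) T' := hueq ▸ hpath
      obtain ⟨W, hW1, hW2⟩ := rpath_split hpath'
      have hWV : W = V'' := rpath_det hW1 hpa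
      subst hWV
      -- the suffix path from V'' is sinking
      have hsink' : Sinking G W (u2b ++ u3) := by
        intro v1 v2 v3 heq hlenv2
        have heq' : u = (u2a ++ v1) ++ v2 ++ v3 := by
          rw [hu23, hsplit, List.append_assoc, heq]; simp [List.append_assoc]
        obtain ⟨a, b, V1, V2, h1, h2, h3, h4, h5⟩ := hsinking (u2a ++ v1) v2 v3 heq' hlenv2
        obtain ⟨W1, hW11, hW12⟩ := rpath_split h3
        have : W1 = W := rpath_det hW11 hpa
        subst this
        exact ⟨a, b, V1, V2, h1, h2, hW12, h4, h5⟩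
      have hlen' : (u2b ++ u3).length ≤ n := by
        have : u.length = u2a.length + (u2b ++ u3).length := by
          rw [hu23, hsplit]; simp only [List.length_append]; omega
        omega
      obtain ⟨v1, v2, V, hveq, hv2len, hpv1, hpv2, d, hd, hocc⟩ :=
        ih W T' (u2b ++ u3) hlen' hW2 hsink'
      refine ⟨u2a ++ v1, v2, V, ?_, hv2len, rpath_append hpa hpv1, hpv2, d + 1, ?_,
        OccAtDepth.step hchild hocc⟩
      · rw [hu23, hsplit, List.append_assoc, hveq]; simp [List.append_assoc]
      · -- u.length / M0 ≤ d + 1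
        have hL : u.length = u2a.length + (u2b ++ u3).length := by
          rw [hu23, hsplit]; simp only [List.length_append]; omega
        have h1 : u.length ≤ (u2b ++ u3).length + M0 G := by omega
        calc u.length / M0 G ≤ ((u2b ++ u3).length + M0 G) / M0 G :=
              Nat.div_le_div_right h1
          _ = (u2b ++ u3).length / M0 G + 1 := Nat.add_div_right _ (M0_pos G)
          _ ≤ d + 1 := by omega

/-- assume every `(A,i)` has a sink word. If `T →u T'` is a sinking path
in `L^rul_G`, then it can be written `T →u1 V →u2 T'` with `|u2| < M_0` and `V` a
subterm occurring in `T` at depth at least `|u| ÷ M_0`. -/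
theorem sinking_path_exposes_deep_subterm (G : FOGrammar)
    (hsink : ∀ (A : Fin G.sig.ntCount) (i : Fin (G.sig.arity A)),
      ∃ w, SinkWord G A i w)
    (T T' : GTerm G.sig) (u : List (GRule G.sig))
    (hpath : RPath G T u T') (hsinking : Sinking G T u) :
    ∃ (u1 u2 : List (GRule G.sig)) (V : GTerm G.sig),
      u = u1 ++ u2 ∧ u2.length < M0 G ∧
      RPath G T u1 V ∧ RPath G V u2 T' ∧
      ∃ d : ℕ, u.length / M0 G ≤ d ∧ OccAtDepth G.sig d T V :=
  key_lemma G u.length T T' u le_rfl hpath hsinking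
end
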